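/- For every λ > 0, the series Σ_{n=0}^∞ (e^{−λ} λ^n / (n+1)!) · e^{(n+1)²} diverges (is not summable). Consequently, for the fitness function f(x) = e^{x²} and the probability measure ρ = δ_1 (Dirac at 1), the expectation of the real fitness distribution σ_1^{f,ρ} = Σ_n (e^{−λ}λ^n/n!)·(h_{n+1})_*(δ_1 ∗ ρ^{∗n}), with h_k(y)=f(y)/k, is infinite; so the exponential-majoration hypothesis cannot be dropped from the finiteness theorem. -/

import Mathlib

open MeasureTheory Filter

/-- The `n`-fold convolution power of a measure on `ℝ`, with `ρ^{∗0} = δ₀`. -/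
noncomputable def convPow (ρ : Measure ℝ) : ℕ → Measure ℝ
  | 0 => Measure.dirac 0
  | n + 1 => (convPow ρ n).conv ρ

/-- The real fitness distribution of the genotype of activity `x`:
`σ_x^{f,ρ} = Σ_n (e^{−λ}λ^n/n!)·(h_{n+1})_*(δ_x ∗ ρ^{∗n})` with `h_k(y) = f(y)/k`. -/
noncomputable def sigmaX (f : ℝ → ℝ) (l x : ℝ) (ρ : Measure ℝ) : Measure ℝ :=
  Measure.sum (fun n : ℕ =>
    ENNReal.ofReal (Real.exp (-l) * l ^ n / n.factorial) •
      ((Measure.dirac x).conv (convPow ρ n)).map (fun y => f y / ((n : ℝ) + 1)))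

lemma le_exp_half (x : ℝ) (hx : 0 ≤ x) : x ≤ Real.exp (x / 2) := by
  have h1 : x / 4 + 1 ≤ Real.exp (x / 4) := Real.add_one_le_exp _
  have h2 : Real.exp (x / 2) = Real.exp (x / 4) * Real.exp (x / 4) := by
    rw [← Real.exp_add]; ring_nf
  have h3 : (x / 4 + 1) * (x / 4 + 1) ≤ Real.exp (x / 4) * Real.exp (x / 4) :=
    mul_le_mul h1 h1 (by positivity) (Real.exp_pos _).le
  nlinarith [sq_nonneg (x / 4 - 1)]

lemma tendsto_r (l : ℝ) (hl : 0 < l) :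
    Tendsto (fun n : ℕ => Real.exp (-l) * l ^ n / (n + 1).factorial *
        Real.exp (((n : ℝ) + 1) ^ 2)) atTop atTop := by
  have key : ∀ n : ℕ, Real.exp (-l + n * Real.log l + ((n : ℝ) + 1) ^ 2 / 2) ≤
      Real.exp (-l) * l ^ n / (n + 1).factorial * Real.exp (((n : ℝ) + 1) ^ 2) := by
    intro n
    have hfac : ((n + 1).factorial : ℝ) ≤ Real.exp (((n : ℝ) + 1) ^ 2 / 2) := by
      have h1 : ((n + 1).factorial : ℝ) ≤ ((n : ℝ) + 1) ^ (n + 1) := by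
        calc ((n + 1).factorial : ℝ) ≤ ((n + 1 : ℕ) : ℝ) ^ (n + 1) := by
              exact_mod_cast Nat.factorial_le_pow (n + 1)
          _ = ((n : ℝ) + 1) ^ (n + 1) := by push_cast; ring
      have h2 : ((n : ℝ) + 1) ^ (n + 1) ≤ Real.exp (((n : ℝ) + 1) / 2) ^ (n + 1) :=
        pow_le_pow_left₀ (by positivity) (le_exp_half _ (by positivity)) _
      have h3 : Real.exp (((n : ℝ) + 1) / 2) ^ (n + 1) =
          Real.exp (((n : ℝ) + 1) ^ 2 / 2) := by
        rw [← Real.exp_nat_mul]; congr 1; push_cast; ring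
      linarith
    have hfacpos : (0 : ℝ) < ((n + 1).factorial : ℝ) := by positivity
    have hln : l ^ n = Real.exp (n * Real.log l) := by
      rw [Real.exp_nat_mul, Real.exp_log hl]
    rw [hln, Real.exp_add, Real.exp_add]
    rw [Real.exp_neg l] at *
    rw [div_mul_eq_mul_div, le_div_iff₀ hfacpos]
    calc (Real.exp l)⁻¹ * Real.exp (n * Real.log l) * Real.exp (((n : ℝ) + 1) ^ 2 / 2) *
          ((n + 1).factorial : ℝ)
        ≤ (Real.exp l)⁻¹ * Real.exp (n * Real.log l) * Real.exp (((n : ℝ) + 1) ^ 2 / 2) *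
          Real.exp (((n : ℝ) + 1) ^ 2 / 2) := by
          apply mul_le_mul_of_nonneg_left hfac; positivity
      _ = (Real.exp l)⁻¹ * Real.exp (n * Real.log l) * Real.exp (((n : ℝ) + 1) ^ 2) := by
          rw [mul_assoc, ← Real.exp_add]; ring_nf
  have hexp : Tendsto (fun n : ℕ => Real.exp (-l + n * Real.log l + ((n : ℝ) + 1) ^ 2 / 2))
      atTop atTop := by
    apply Real.tendsto_exp_atTop.comp
    have hlow : ∀ n : ℕ, (n : ℝ) * (Real.log l + (n : ℝ) / 2) - l ≤
        -l + n * Real.log l + ((n : ℝ) + 1) ^ 2 / 2 := by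
      intro n; nlinarith [Nat.cast_nonneg (α := ℝ) n]
    apply tendsto_atTop_mono hlow
    apply tendsto_atTop_add_const_right
    apply Tendsto.atTop_mul_atTop₀ tendsto_natCast_atTop_atTop
    apply tendsto_atTop_add_const_left
    exact Tendsto.atTop_div_const (by norm_num) tendsto_natCast_atTop_atTop
  exact tendsto_atTop_mono key hexp

theorem counterexample_without_exponential_majoration
    (l : ℝ) (hl : 0 < l) :
    ¬ Summable (fun n : ℕ => Real.exp (-l) * l ^ n / (n + 1).factorial *
        Real.exp (((n : ℝ) + 1) ^ 2)) ∧
    ¬ Integrable (fun y => y)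
        (sigmaX (fun x => Real.exp (x ^ 2)) l 1 (Measure.dirac 1)) := by
  set r : ℕ → ℝ := fun n => Real.exp (-l) * l ^ n / (n + 1).factorial *
      Real.exp (((n : ℝ) + 1) ^ 2) with hr
  have hrt := tendsto_r l hl
  constructor
  · intro hs
    have h0 := hs.tendsto_atTop_zero
    have h1 : ∀ᶠ n : ℕ in atTop, r n < 1 := by
      have := h0.eventually (gt_mem_nhds (show (0:ℝ) < 1 by norm_num))
      exact this
    have h2 : ∀ᶠ n : ℕ in atTop, 1 ≤ r n := hrt.eventually_ge_atTop 1
    obtain ⟨n, hn1, hn2⟩ := (h1.and h2).exists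
    linarith
  · intro hi
    have hconv : ∀ n : ℕ, convPow (Measure.dirac 1) n = Measure.dirac (n : ℝ) := by
      intro n
      induction n with
      | zero => simp [convPow]
      | succ n ih =>
        rw [convPow, ih]
        unfold Measure.conv
        rw [Measure.dirac_prod_dirac, Measure.map_dirac' (by fun_prop)]
        push_cast; ring_nf
    have hmap : ∀ n : ℕ,
        ((Measure.dirac (1:ℝ)).conv (convPow (Measure.dirac 1) n)).map
          (fun y => Real.exp (y ^ 2) / ((n : ℝ) + 1)) =
        Measure.dirac (Real.exp (((n : ℝ) + 1) ^ 2) / ((n : ℝ) + 1)) := by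
      intro n
      rw [hconv n]
      unfold Measure.conv
      rw [Measure.dirac_prod_dirac, Measure.map_dirac' (by fun_prop),
        Measure.map_dirac' (by fun_prop)]
      norm_num [add_comm]
    have hfin := hi.hasFiniteIntegral
    rw [HasFiniteIntegral] at hfin
    have hlin : ∫⁻ a, ‖a‖ₑ ∂(sigmaX (fun x => Real.exp (x ^ 2)) l 1 (Measure.dirac 1)) =
        ∑' n : ℕ, ENNReal.ofReal (Real.exp (-l) * l ^ n / n.factorial) *
          ENNReal.ofReal (Real.exp (((n : ℝ) + 1) ^ 2) / ((n : ℝ) + 1)) := by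
      rw [sigmaX, lintegral_sum_measure]
      congr 1
      ext n
      rw [lintegral_smul_measure, hmap n, lintegral_dirac]
      congr 1
      rw [← Real.enorm_eq_ofReal (by positivity)]
    rw [hlin] at hfin
    have hterm : ∀ n : ℕ, ENNReal.ofReal (r n) ≤
        ∑' n : ℕ, ENNReal.ofReal (Real.exp (-l) * l ^ n / n.factorial) *
          ENNReal.ofReal (Real.exp (((n : ℝ) + 1) ^ 2) / ((n : ℝ) + 1)) := by
      intro n
      have : ENNReal.ofReal (r n) =
          ENNReal.ofReal (Real.exp (-l) * l ^ n / n.factorial) *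
          ENNReal.ofReal (Real.exp (((n : ℝ) + 1) ^ 2) / ((n : ℝ) + 1)) := by
        rw [← ENNReal.ofReal_mul (by positivity)]
        congr 1
        have hfs : ((n + 1).factorial : ℝ) = ((n : ℝ) + 1) * (n.factorial : ℝ) := by
          rw [Nat.factorial_succ]; push_cast; ring
        show Real.exp (-l) * l ^ n / ((n + 1).factorial : ℝ) *
          Real.exp (((n : ℝ) + 1) ^ 2) = _
        rw [hfs]
        have h1 : (0:ℝ) < (n.factorial : ℝ) := by positivity
        have h2 : (0:ℝ) < (n : ℝ) + 1 := by positivity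
        field_simp
      rw [this]
      exact ENNReal.le_tsum n
    set C := ∑' n : ℕ, ENNReal.ofReal (Real.exp (-l) * l ^ n / n.factorial) *
          ENNReal.ofReal (Real.exp (((n : ℝ) + 2) ^ 2) / ((n : ℝ) + 1)) with hC
    have hbound : ∀ n : ℕ, r n ≤ (∑' n : ℕ,
        ENNReal.ofReal (Real.exp (-l) * l ^ n / n.factorial) *
          ENNReal.ofReal (Real.exp (((n : ℝ) + 1) ^ 2) / ((n : ℝ) + 1))).toReal := by
      intro n
      have := ENNReal.toReal_mono hfin.ne (hterm n)
      rwa [ENNReal.toReal_ofReal (by positivity)] at this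
    obtain ⟨n, hn⟩ := (hrt.eventually_gt_atTop _).exists
    exact absurd (hbound n) (not_le.mpr hn)
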